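/- Let P₁ and P₂ be intersecting shortest paths in an undirected positively-weighted graph, and let v be the first vertex of P₁ lying in P₁ ∩ P₂. Then either P₁ ∩ P₂ = {v}, or v is the first vertex of P₂ lying in P₁ ∩ P₂, or v is the last vertex of P₂ lying in P₁ ∩ P₂. -/

import Mathlib

/-- A graph with real edge weights that are strictly positive on edges. -/
structure WeightedGraph (V : Type*) where
  Adj : V → V → Prop
  w : V → V → ℝ
  pos : ∀ {u v : V}, Adj u v → 0 < w u v

namespace WeightedGraph

variable {V : Type*} (G : WeightedGraph V)

/-- The graph is undirected: adjacency and weights are symmetric. -/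
def IsUndirected : Prop :=
  (∀ u v, G.Adj u v → G.Adj v u) ∧ (∀ u v, G.w u v = G.w v u)

/-- Total weight of a vertex sequence (sum of weights of consecutive pairs). -/
def weight (l : List V) : ℝ :=
  ((l.zip l.tail).map fun p => G.w p.1 p.2).sum

/-- A (simple) path: a nonempty sequence of distinct vertices with consecutive
vertices adjacent. -/
def IsPath (l : List V) : Prop :=
  l ≠ [] ∧ l.Chain' G.Adj ∧ l.Nodup

/-- A path beginning at `u` and ending at `v`. -/
def IsPathFrom (l : List V) (u v : V) : Prop :=
  G.IsPath l ∧ l.head? = some u ∧ l.getLast? = some v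

/-- A shortest path between its endpoints: a path whose total weight is at most
that of any path with the same endpoints. -/
def IsShortest (l : List V) : Prop :=
  G.IsPath l ∧ ∀ l', G.IsPath l' → l'.head? = l.head? → l'.getLast? = l.getLast? →
    G.weight l ≤ G.weight l'

/-- Weighted graph distance from `u` to `v`. -/
noncomputable def dist (u v : V) : ℝ :=
  sInf {c : ℝ | ∃ l, G.IsPathFrom l u v ∧ G.weight l = c}

end WeightedGraph



lemma getLast?_cons_append {α : Type*} (c : List α) (y : α) (B : List α) :
    (c ++ y :: B).getLast? = (y :: B).getLast? := by
  rw [List.getLast?_append]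
  have : (y :: B).getLast?.isSome := by
    rw [List.getLast?_isSome]; simp
  obtain ⟨x, hx⟩ := Option.isSome_iff_exists.mp this
  simp [hx]

lemma head?_cons_append {α : Type*} (c : List α) (y : α) (B B' : List α) :
    (c ++ y :: B).head? = (c ++ y :: B').head? := by
  cases c <;> simp

lemma not_nodup_decomp {α : Type*} : ∀ (l : List α), ¬ l.Nodup →
    ∃ (A B C : List α) (x : α), l = A ++ x :: B ++ x :: C
  | [], h => absurd List.nodup_nil h
  | a :: t, h => by
      by_cases ha : a ∈ t
      · obtain ⟨B, C, hBC⟩ := List.append_of_mem ha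
        exact ⟨[], B, C, a, by simp [hBC]⟩
      · have ht : ¬ t.Nodup := fun hnd => h (List.nodup_cons.mpr ⟨ha, hnd⟩)
        obtain ⟨A, B, C, x, hx⟩ := not_nodup_decomp t ht
        exact ⟨a :: A, B, C, x, by simp [hx]⟩


namespace WeightedGraph
variable {V : Type*} (G : WeightedGraph V)

@[simp] lemma weight_nil : G.weight ([] : List V) = 0 := by simp [weight]
@[simp] lemma weight_single (x : V) : G.weight [x] = 0 := by simp [weight]
@[simp] lemma weight_cons₂ (x y : V) (l : List V) :
    G.weight (x :: y :: l) = G.w x y + G.weight (y :: l) := by simp [weight]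

lemma weight_append_cons : ∀ (a : List V) (x : V) (b : List V),
    G.weight (a ++ x :: b) = G.weight (a ++ [x]) + G.weight (x :: b)
  | [], x, b => by simp
  | [h], x, b => by simp
  | h1 :: h2 :: t, x, b => by
      have := weight_append_cons (h2 :: t) x b
      simp only [List.cons_append, weight_cons₂] at *
      rw [this]; ring

lemma weight_nonneg : ∀ (l : List V), l.Chain' G.Adj → 0 ≤ G.weight l
  | [], _ => le_of_eq (by simp)
  | [_], _ => le_of_eq (by simp)
  | x :: y :: t, h => by
      unfold List.Chain' at h; rw [List.isChain_cons_cons] at h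
      have h1 := G.pos h.1
      have h2 := weight_nonneg (y :: t) h.2
      simp only [weight_cons₂]; linarith

lemma weight_pos : ∀ (l : List V), 2 ≤ l.length → l.Chain' G.Adj → 0 < G.weight l
  | x :: y :: t, _, h => by
      unfold List.Chain' at h; rw [List.isChain_cons_cons] at h
      have h1 := G.pos h.1
      have h2 := weight_nonneg G (y :: t) h.2
      simp only [weight_cons₂]; linarith

lemma weight_reverse (hsym : ∀ u v, G.w u v = G.w v u) :
    ∀ (l : List V), G.weight l.reverse = G.weight l
  | [] => by simp
  | [_] => by simp
  | x :: y :: t => by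
      have IH := weight_reverse hsym (y :: t)
      have h1 : (x :: y :: t).reverse = (y :: t).reverse ++ [x] := by simp
      have h2 : (y :: t).reverse = t.reverse ++ [y] := by simp
      have h3 : (x :: y :: t).reverse = t.reverse ++ y :: [x] := by simp
      rw [h3, G.weight_append_cons t.reverse y [x], ← h2, IH]
      simp only [weight_cons₂, weight_single, weight_nil]
      rw [hsym y x]
      ring


lemma walk_to_path : ∀ (n : ℕ) (l : List V), l.length ≤ n → l ≠ [] → l.Chain' G.Adj →
    ∃ p, G.IsPath p ∧ p.head? = l.head? ∧ p.getLast? = l.getLast? ∧ G.weight p ≤ G.weight l := by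
  intro n
  induction n with
  | zero => intro l hlen hne _; simp [List.length_eq_zero_iff.mp (Nat.le_zero.mp hlen)] at hne
  | succ n IH =>
      intro l hlen hne hch
      by_cases hnd : l.Nodup
      · exact ⟨l, ⟨hne, hch, hnd⟩, rfl, rfl, le_refl _⟩
      · obtain ⟨A, B, C, x, hl⟩ := not_nodup_decomp l hnd
        set l₂ := A ++ x :: C with hl₂
        have hlen₂ : l₂.length ≤ n := by
          have h1 : l.length = A.length + B.length + C.length + 2 := by simp [hl]; ring
          have h2 : l₂.length = A.length + C.length + 1 := by simp [hl₂]; ring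
          omega
        have hchA : List.Chain' G.Adj A ∧ List.Chain' G.Adj (x :: (B ++ x :: C)) ∧
            ∀ a ∈ A.getLast?, ∀ b ∈ (x :: (B ++ x :: C)).head?, G.Adj a b := by
          unfold List.Chain'; rw [← List.isChain_append]; rw [hl] at hch; unfold List.Chain' at hch
          simpa only [List.append_assoc, List.cons_append] using hch
        have hsplit : x :: (B ++ x :: C) = (x :: B ++ [x]) ++ C := by simp
        have hchmid : List.Chain' G.Adj (x :: B ++ [x]) ∧ List.Chain' G.Adj (x :: C) := by
          have h := hchA.2.1
          unfold List.Chain' at h; rw [show x :: (B ++ x :: C) = (x :: B) ++ x :: C by simp, List.isChain_append] at h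
          constructor
          · unfold List.Chain'; rw [show x :: B ++ [x] = (x :: B) ++ [x] by simp, List.isChain_append]
            refine ⟨h.1, List.isChain_singleton x, ?_⟩
            intro a ha b hb
            simp at hb; subst hb
            exact h.2.2 a ha x (by simp)
          · exact h.2.1
        have hch₂ : List.Chain' G.Adj l₂ := by
          unfold List.Chain'; rw [hl₂, List.isChain_append]
          exact ⟨hchA.1, hchmid.2, fun a ha b hb => by
            simp at hb; subst hb; exact hchA.2.2 a ha x (by simp)⟩
        have hne₂ : l₂ ≠ [] := by simp [hl₂]
        obtain ⟨p, hp, hph, hpl, hpw⟩ := IH l₂ hlen₂ hne₂ hch₂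
        refine ⟨p, hp, ?_, ?_, ?_⟩
        · rw [hph, hl₂, hl, show A ++ x :: B ++ x :: C = A ++ x :: (B ++ x :: C) by simp]
          exact head?_cons_append A x C (B ++ x :: C)
        · rw [hpl, hl₂, hl, getLast?_cons_append A x C,
            show A ++ x :: B ++ x :: C = (A ++ x :: B) ++ x :: C by simp,
            getLast?_cons_append (A ++ x :: B) x C]
        · have e1 : G.weight l = G.weight (A ++ [x]) + G.weight (x :: B ++ [x]) + G.weight (x :: C) := by
            rw [hl, show A ++ x :: B ++ x :: C = A ++ x :: (B ++ x :: C) by simp,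
              G.weight_append_cons A x (B ++ x :: C)]
            have := G.weight_append_cons (x :: B) x C
            simp only [List.cons_append] at this ⊢
            rw [this]; ring
          have e2 : G.weight l₂ = G.weight (A ++ [x]) + G.weight (x :: C) :=
            G.weight_append_cons A x C
          have e3 : 0 ≤ G.weight (x :: B ++ [x]) := G.weight_nonneg _ hchmid.1
          linarith

lemma shortest_weight_eq {p q : List V} (hp : G.IsShortest p) (hq : G.IsShortest q)
    (hh : p.head? = q.head?) (hl : p.getLast? = q.getLast?) : G.weight p = G.weight q :=
  le_antisymm (hp.2 q hq.1 hh.symm hl.symm) (hq.2 p hp.1 hh hl)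

lemma exists_concat_of_getLast? {l : List V} {a : V} (h : l.getLast? = some a) :
    ∃ l', l = l' ++ [a] := by
  have hne : l ≠ [] := by rintro rfl; simp at h
  refine ⟨l.dropLast, ?_⟩
  have h2 := List.dropLast_append_getLast hne
  rw [List.getLast?_eq_getLast hne, Option.some_inj] at h
  rw [← h]
  exact h2.symm

lemma seg_shortest (A M B : List V) (x y : V)
    (h : G.IsShortest (A ++ x :: M ++ y :: B)) : G.IsShortest (x :: (M ++ [y])) := by
  have hinfix : (x :: (M ++ [y])) <:+: (A ++ x :: M ++ y :: B) :=
    ⟨A, B, by simp⟩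
  have hpath : G.IsPath (x :: (M ++ [y])) := by
    refine ⟨by simp, h.1.2.1.infix hinfix, h.1.2.2.sublist hinfix.sublist⟩
  have hxy : x ≠ y := by
    have := hpath.2.2
    simp only [List.nodup_cons] at this
    intro he; exact this.1 (by simp [he])
  refine ⟨hpath, ?_⟩
  intro l' hl' hh hlg
  -- l' = x :: q' ++ [y]
  have hh' : l'.head? = some x := by simpa using hh
  have hlg' : l'.getLast? = some y := by
    rw [hlg]
    rw [show x :: (M ++ [y]) = (x :: M) ++ [y] by simp, List.getLast?_concat]
  obtain ⟨q, hq⟩ := exists_concat_of_getLast? hlg'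
  have hqne : q ≠ [] := by
    rintro rfl
    simp [hq] at hh'
    exact hxy hh'.symm
  obtain ⟨x', q', rfl⟩ := List.exists_cons_of_ne_nil hqne
  have hx' : x' = x := by simpa [hq] using hh'
  rw [hx'] at hq
  -- the walk W
  set W : List V := A ++ (x :: (q' ++ [y])) ++ B with hW
  have hWeq : W = A ++ x :: q' ++ y :: B := by simp [hW]
  have hch := h.1.2.1
  unfold List.Chain' at hch; rw [show A ++ x :: M ++ y :: B = A ++ ((x :: M) ++ (y :: B)) by simp,
    List.isChain_append] at hch
  have hchmid := hch.2.1
  rw [List.isChain_append] at hchmid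
  have hchyB : List.Chain' G.Adj (y :: B) := hchmid.2.1
  have hchW : List.Chain' G.Adj W := by
    unfold List.Chain'; rw [show W = A ++ (l' ++ B) by simp [hW, hq]]
    rw [List.isChain_append]
    refine ⟨hch.1, ?_, ?_⟩
    · rw [List.isChain_append]
      refine ⟨hl'.2.1, hchyB.tail, ?_⟩
      intro a ha b hb
      rw [hlg'] at ha
      simp at ha; subst ha
      unfold List.Chain' at hchyB; rw [List.isChain_cons] at hchyB
      exact hchyB.1 b hb
    · intro a ha b hb
      refine hch.2.2 a ha b ?_
      rw [hq] at hb
      simpa using hb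
  have hWne : W ≠ [] := by simp [hW]
  have hWhead : W.head? = (A ++ x :: M ++ y :: B).head? := by
    rw [hWeq, show A ++ x :: M ++ y :: B = A ++ x :: (M ++ y :: B) by simp,
      show A ++ x :: q' ++ y :: B = A ++ x :: (q' ++ y :: B) by simp]
    exact head?_cons_append A x _ _
  have hWlast : W.getLast? = (A ++ x :: M ++ y :: B).getLast? := by
    rw [hWeq, show A ++ x :: M ++ y :: B = (A ++ x :: M) ++ y :: B by simp,
      show A ++ x :: q' ++ y :: B = (A ++ x :: q') ++ y :: B by simp,
      getLast?_cons_append, getLast?_cons_append]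
  obtain ⟨p, hp, hph, hpl, hpw⟩ := G.walk_to_path W.length W le_rfl hWne hchW
  have hlow := h.2 p hp (by rw [hph, hWhead]) (by rw [hpl, hWlast])
  have e1 : G.weight (A ++ x :: M ++ y :: B)
      = G.weight (A ++ [x]) + G.weight (x :: (M ++ [y])) + G.weight (y :: B) := by
    rw [show A ++ x :: M ++ y :: B = A ++ x :: (M ++ y :: B) by simp,
      G.weight_append_cons A x (M ++ y :: B)]
    have h2 := G.weight_append_cons (x :: M) y B
    simp only [List.cons_append] at h2
    rw [h2]
    try simp only [List.cons_append]
    ring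
  have e2 : G.weight W
      = G.weight (A ++ [x]) + G.weight l' + G.weight (y :: B) := by
    rw [hWeq, show A ++ x :: q' ++ y :: B = A ++ x :: (q' ++ y :: B) by simp,
      G.weight_append_cons A x (q' ++ y :: B)]
    have h2 := G.weight_append_cons (x :: q') y B
    simp only [List.cons_append] at h2
    rw [h2, hq]
    try simp only [List.cons_append]
    ring
  rw [e1] at hlow
  rw [e2] at hpw
  linarith

lemma isShortest_reverse (hG : G.IsUndirected) {l : List V} (h : G.IsShortest l) :
    G.IsShortest l.reverse := by
  have hpath : G.IsPath l.reverse := by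
    refine ⟨by simp [h.1.1], ?_, by simp [h.1.2.2]⟩
    unfold List.Chain'; rw [List.isChain_reverse]
    exact h.1.2.1.imp fun a b hab => hG.1 a b hab
  refine ⟨hpath, ?_⟩
  intro l' hl' hh hlg
  have hrp : G.IsPath l'.reverse := by
    refine ⟨by simp [hl'.1], ?_, by simp [hl'.2.2]⟩
    unfold List.Chain'; rw [List.isChain_reverse]
    exact hl'.2.1.imp fun a b hab => hG.1 a b hab
  have := h.2 l'.reverse hrp
    (by rw [List.head?_reverse, hlg, List.getLast?_reverse])
    (by rw [List.getLast?_reverse, hh, List.head?_reverse])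
  calc G.weight l.reverse = G.weight l := G.weight_reverse hG.2 l
    _ ≤ G.weight l'.reverse := this
    _ = G.weight l' := G.weight_reverse hG.2 l'

lemma core (hG : G.IsUndirected) {P Q : List V} (hP : G.IsShortest P) (hQ : G.IsShortest Q)
    (x y z : V) (A₁ M₁ N₁ B₁ A₂ M₂ N₂ B₂ : List V)
    (h1 : P = A₁ ++ x :: M₁ ++ y :: N₁ ++ z :: B₁)
    (h2 : Q = A₂ ++ y :: M₂ ++ x :: N₂ ++ z :: B₂) : False := by
  have Sxy : G.IsShortest (x :: (M₁ ++ [y])) :=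
    G.seg_shortest A₁ M₁ (N₁ ++ z :: B₁) x y
      (by rw [show A₁ ++ x :: M₁ ++ y :: (N₁ ++ z :: B₁) = P by rw [h1]; try simp]; exact hP)
  have Syz : G.IsShortest (y :: (N₁ ++ [z])) :=
    G.seg_shortest (A₁ ++ x :: M₁) N₁ B₁ y z
      (by rw [show (A₁ ++ x :: M₁) ++ y :: N₁ ++ z :: B₁ = P by rw [h1]; try simp]; exact hP)
  have Sxz : G.IsShortest (x :: ((M₁ ++ y :: N₁) ++ [z])) :=
    G.seg_shortest A₁ (M₁ ++ y :: N₁) B₁ x z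
      (by rw [show A₁ ++ x :: (M₁ ++ y :: N₁) ++ z :: B₁ = P by rw [h1]; try simp]; exact hP)
  have Tyx : G.IsShortest (y :: (M₂ ++ [x])) :=
    G.seg_shortest A₂ M₂ (N₂ ++ z :: B₂) y x
      (by rw [show A₂ ++ y :: M₂ ++ x :: (N₂ ++ z :: B₂) = Q by rw [h2]; try simp]; exact hQ)
  have Txz : G.IsShortest (x :: (N₂ ++ [z])) :=
    G.seg_shortest (A₂ ++ y :: M₂) N₂ B₂ x z
      (by rw [show (A₂ ++ y :: M₂) ++ x :: N₂ ++ z :: B₂ = Q by rw [h2]; try simp]; exact hQ)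
  have Tyz : G.IsShortest (y :: ((M₂ ++ x :: N₂) ++ [z])) :=
    G.seg_shortest A₂ (M₂ ++ x :: N₂) B₂ y z
      (by rw [show A₂ ++ y :: (M₂ ++ x :: N₂) ++ z :: B₂ = Q by rw [h2]; try simp]; exact hQ)
  have eq1 : G.weight (x :: ((M₁ ++ y :: N₁) ++ [z]))
      = G.weight (x :: (M₁ ++ [y])) + G.weight (y :: (N₁ ++ [z])) := by
    have h := G.weight_append_cons (x :: M₁) y (N₁ ++ [z])
    simpa using h
  have eq2 : G.weight (y :: ((M₂ ++ x :: N₂) ++ [z]))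
      = G.weight (y :: (M₂ ++ [x])) + G.weight (x :: (N₂ ++ [z])) := by
    have h := G.weight_append_cons (y :: M₂) x (N₂ ++ [z])
    simpa using h
  have lastseg : ∀ (u : V) (L : List V) (w : V), (u :: (L ++ [w])).getLast? = some w := by
    intro u L w
    rw [show u :: (L ++ [w]) = (u :: L) ++ [w] by simp, List.getLast?_concat]
  have c1 : G.weight (y :: (N₁ ++ [z])) = G.weight (y :: ((M₂ ++ x :: N₂) ++ [z])) :=
    G.shortest_weight_eq Syz Tyz (by simp) (by rw [lastseg, lastseg])
  have c2 : G.weight (x :: ((M₁ ++ y :: N₁) ++ [z])) = G.weight (x :: (N₂ ++ [z])) :=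
    G.shortest_weight_eq Sxz Txz (by simp) (by rw [lastseg, lastseg])
  have c3 : G.weight (x :: (M₁ ++ [y])) = G.weight (y :: (M₂ ++ [x])) := by
    have hrev := G.isShortest_reverse hG Tyx
    have := G.shortest_weight_eq Sxy hrev
      (by rw [List.head?_reverse, lastseg]; simp)
      (by rw [List.getLast?_reverse, lastseg]; simp)
    rw [this, G.weight_reverse hG.2]
  have hpos : 0 < G.weight (y :: (M₂ ++ [x])) := by
    refine G.weight_pos _ (by simp) Tyx.1.2.1
  linarith


end WeightedGraph

lemma mem_order {α : Type*} : ∀ (l : List α) (x y : α), x ∈ l → y ∈ l → x ≠ y →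
    (∃ A M B, l = A ++ x :: M ++ y :: B) ∨ (∃ A M B, l = A ++ y :: M ++ x :: B)
  | [], x, y, hx, _, _ => by simp at hx
  | a :: t, x, y, hx, hy, hxy => by
      by_cases hxa : x = a
      · subst hxa
        have hyt : y ∈ t := by
          rcases List.mem_cons.mp hy with h | h
          · exact absurd h.symm hxy
          · exact h
        obtain ⟨M, B, hMB⟩ := List.append_of_mem hyt
        exact Or.inl ⟨[], M, B, by simp [hMB]⟩
      · by_cases hya : y = a
        · subst hya
          have hxt : x ∈ t := by
            rcases List.mem_cons.mp hx with h | h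
            · exact absurd h hxa
            · exact h
          obtain ⟨M, B, hMB⟩ := List.append_of_mem hxt
          exact Or.inr ⟨[], M, B, by simp [hMB]⟩
        · have hxt : x ∈ t := by
            rcases List.mem_cons.mp hx with h | h
            · exact absurd h hxa
            · exact h
          have hyt : y ∈ t := by
            rcases List.mem_cons.mp hy with h | h
            · exact absurd h hya
            · exact h
          rcases mem_order t x y hxt hyt hxy with ⟨A, M, B, hl⟩ | ⟨A, M, B, hl⟩
          · exact Or.inl ⟨a :: A, M, B, by simp [hl]⟩
          · exact Or.inr ⟨a :: A, M, B, by simp [hl]⟩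




/-- `v` is the first vertex of `P` lying in the set `S`. -/
def FirstIn {V : Type*} (P : List V) (S : Set V) (v : V) : Prop :=
  v ∈ S ∧ ∃ pre post : List V, P = pre ++ v :: post ∧ ∀ x ∈ pre, x ∉ S

/-- `v` is the last vertex of `P` lying in the set `S`. -/
def LastIn {V : Type*} (P : List V) (S : Set V) (v : V) : Prop :=
  v ∈ S ∧ ∃ pre post : List V, P = pre ++ v :: post ∧ ∀ x ∈ post, x ∉ S

/-- Intersection types are exhaustive: if `P₁` and `P₂` are intersecting shortest
paths in an undirected positively-weighted graph and `v` is the first vertex of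
`P₁` lying in `P₁ ∩ P₂`, then either `P₁ ∩ P₂ = {v}`, or `v` is the first vertex
of `P₂` in `P₁ ∩ P₂`, or `v` is the last vertex of `P₂` in `P₁ ∩ P₂`. -/
theorem intersection_types_exhaustive {V : Type*} (G : WeightedGraph V)
    (hG : G.IsUndirected) (P₁ P₂ : List V)
    (h₁ : G.IsShortest P₁) (h₂ : G.IsShortest P₂)
    (v : V) (hv : FirstIn P₁ {x | x ∈ P₁ ∧ x ∈ P₂} v) :
    ({x | x ∈ P₁ ∧ x ∈ P₂} = {v}) ∨
    FirstIn P₂ {x | x ∈ P₁ ∧ x ∈ P₂} v ∨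
    LastIn P₂ {x | x ∈ P₁ ∧ x ∈ P₂} v := by
  set S : Set V := {x | x ∈ P₁ ∧ x ∈ P₂} with hS
  by_cases hF : FirstIn P₂ S v
  · exact Or.inr (Or.inl hF)
  by_cases hL : LastIn P₂ S v
  · exact Or.inr (Or.inr hL)
  exfalso
  obtain ⟨hvS, pre₁, post₁, hP₁, hpre₁⟩ := hv
  have hvP₂ : v ∈ P₂ := hvS.2
  obtain ⟨pre₂, post₂, hP₂⟩ := List.append_of_mem hvP₂
  obtain ⟨a, hapre, haS⟩ : ∃ a ∈ pre₂, a ∈ S := by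
    by_contra h
    push_neg at h
    exact hF ⟨hvS, pre₂, post₂, hP₂, h⟩
  obtain ⟨b, hbpost, hbS⟩ : ∃ b ∈ post₂, b ∈ S := by
    by_contra h
    push_neg at h
    exact hL ⟨hvS, pre₂, post₂, hP₂, h⟩
  have hnd₂ : (pre₂ ++ v :: post₂).Nodup := by rw [← hP₂]; exact h₂.1.2.2
  have hdisj := List.disjoint_of_nodup_append hnd₂
  have hav : a ≠ v := fun h => hdisj (h ▸ hapre) (by simp)
  have hbv : b ≠ v := by
    intro h
    exact (List.nodup_cons.mp hnd₂.of_append_right).1 (h ▸ hbpost)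
  have hab : a ≠ b := fun h => hdisj hapre (by simp [Or.inr hbpost, h])
  have hmem_post₁ : ∀ c ∈ S, c ≠ v → c ∈ post₁ := by
    intro c hcS hcv
    have hc₁ : c ∈ P₁ := hcS.1
    rw [hP₁] at hc₁
    rcases List.mem_append.mp hc₁ with h | h
    · exact absurd hcS (hpre₁ c h)
    · rcases List.mem_cons.mp h with h | h
      · exact absurd h hcv
      · exact h
  have hapost₁ : a ∈ post₁ := hmem_post₁ a haS hav
  have hbpost₁ : b ∈ post₁ := hmem_post₁ b hbS hbv
  obtain ⟨A₂, M₂, hpre₂d⟩ := List.append_of_mem hapre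
  obtain ⟨N₂, B₂, hpost₂d⟩ := List.append_of_mem hbpost
  rcases mem_order post₁ a b hapost₁ hbpost₁ hab with ⟨A, M, B, hord⟩ | ⟨A, M, B, hord⟩
  · exact G.core hG h₁ h₂ v a b pre₁ A M B A₂ M₂ N₂ B₂
      (by rw [hP₁, hord]; simp)
      (by rw [hP₂, hpre₂d, hpost₂d]; simp)
  · exact G.core hG h₁ (G.isShortest_reverse hG h₂) v b a pre₁ A M B
      B₂.reverse N₂.reverse M₂.reverse A₂.reverse
      (by rw [hP₁, hord]; simp)
      (by rw [hP₂, hpre₂d, hpost₂d]; simp)
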